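/- arXiv:2305.16218 — 2 statements merged into one kernel-verified Lean document; each statement's English description precedes it below -/
import Mathlib

section
/- Let p be a prime and let m_0, ..., m_i be natural numbers with n = m_0 + ... + m_i. Then the multinomial coefficient n!/(m_0!···m_i!) satisfies the congruence n!/(m_0!···m_i!) ≡ ∏_{l ≥ 0} C(n_l; m_{0,l}, ..., m_{i,l}) (mod p), where n_l and m_{j,l} denote the l-th base-p digits of n and m_j respectively, and where C(a; b_0, ..., b_i) denotes the coefficient of X_0^{b_0}···X_i^{b_i} in (X_0 + ... + X_i)^a, i.e. C(a; b_0, ..., b_i) equals a!/(b_0!···b_i!) if b_0 + ... + b_i = a and equals 0 otherwise. (The product over l is finite since all factors are 1 for l large.) -/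
/-- The `l`-th digit of `n` in base `p`. -/
def digit (p l n : ℕ) : ℕ := n / p ^ l % p

/-- `C(a; b_0, ..., b_{k-1})`: the coefficient of `X_0^{b_0} ⋯ X_{k-1}^{b_{k-1}}` in
`(X_0 + ⋯ + X_{k-1})^a`, i.e. `a!/(b_0!⋯b_{k-1}!)` if `b_0 + ⋯ + b_{k-1} = a`,
and `0` otherwise. -/
def genMultinomial {k : ℕ} (a : ℕ) (b : Fin k → ℕ) : ℕ :=
  if (∑ j, b j) = a then Nat.multinomial Finset.univ b else 0


lemma multinomial_map {α β : Type*} (s : Finset α) (e : α ↪ β) (f : β → ℕ) :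
    Nat.multinomial (s.map e) f = Nat.multinomial s (f ∘ e) := by
  unfold Nat.multinomial
  rw [Finset.sum_map, Finset.prod_map]
  rfl

lemma mult_peel {k : ℕ} (m : Fin (k + 1) → ℕ) :
    Nat.multinomial Finset.univ m =
      (∑ j, m j).choose (m 0) * Nat.multinomial Finset.univ (fun j : Fin k => m j.succ) := by
  rw [Fin.univ_succ, Nat.multinomial_cons, multinomial_map, Finset.sum_cons, Finset.sum_map]
  rfl



lemma gm_peel {k : ℕ} (a : ℕ) (b : Fin (k + 1) → ℕ) :
    genMultinomial a b = a.choose (b 0) * genMultinomial (a - b 0) (fun j => b j.succ) := by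
  unfold genMultinomial
  have hbeta : (∑ j, (fun (j : Fin k) => b j.succ) j) = ∑ j : Fin k, b j.succ := rfl
  rw [hbeta, Fin.sum_univ_succ]
  by_cases h0 : b 0 ≤ a
  · by_cases h : b 0 + ∑ j : Fin k, b j.succ = a
    · rw [if_pos h, if_pos (by omega), mult_peel b, Fin.sum_univ_succ, h]
    · rw [if_neg h, if_neg (by omega), mul_zero]
  · rw [if_neg (by have := Nat.zero_le (∑ j : Fin k, b j.succ); omega),
      Nat.choose_eq_zero_of_lt (by omega), zero_mul]

lemma step (p : ℕ) (hp : p.Prime) : ∀ {k : ℕ} (m : Fin k → ℕ),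
    Nat.multinomial Finset.univ m ≡
      genMultinomial ((∑ j, m j) % p) (fun j => m j % p) *
        Nat.multinomial Finset.univ (fun j => m j / p) [MOD p] := by
  haveI : Fact p.Prime := ⟨hp⟩
  intro k
  induction k with
  | zero =>
    intro m
    simp [genMultinomial, Nat.multinomial]
    rfl
  | succ k ih =>
    intro m
    set a := m 0 with ha
    set t := fun j : Fin k => m j.succ with ht
    set n := ∑ j, m j with hn
    set n' := ∑ j, t j with hn'
    have hnn : n = a + n' := Fin.sum_univ_succ m
    have hp0 : 0 < p := hp.pos
    rw [mult_peel m, ← hn, ← ha, ← ht]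
    have hrw : genMultinomial (n % p) (fun j => m j % p) *
        Nat.multinomial Finset.univ (fun j => m j / p)
        = ((n % p).choose (a % p)) * genMultinomial (n % p - a % p) (fun j => t j % p) *
          ((∑ j : Fin (k+1), m j / p).choose (a / p) *
            Nat.multinomial Finset.univ (fun j : Fin k => t j / p)) := by
      rw [gm_peel, mult_peel (fun j => m j / p)]
    rw [hrw]
    have h1 : n.choose a ≡ (n % p).choose (a % p) * ((n / p).choose (a / p)) [MOD p] :=
      Choose.choose_modEq_choose_mod_mul_choose_div_nat
    have h2 := ih t
    refine ((h1.mul h2).trans ?_)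
    rw [← hn']
    have key : (n % p).choose (a % p) * ((n / p).choose (a / p)) *
        (genMultinomial (n' % p) (fun j => t j % p) *
          Nat.multinomial Finset.univ (fun j => t j / p))
        = ((n % p).choose (a % p)) * genMultinomial (n % p - a % p) (fun j => t j % p) *
          ((∑ j : Fin (k+1), m j / p).choose (a / p) *
            Nat.multinomial Finset.univ (fun j : Fin k => t j / p)) := by
      set x := ∑ j : Fin k, t j % p with hx
      set s' := ∑ j : Fin k, t j / p with hs'
      have hsum : (∑ j : Fin (k+1), m j / p) = a / p + s' := Fin.sum_univ_succ _
      have hxn : n' = p * s' + x := by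
        rw [hn', hx, hs', Finset.mul_sum, ← Finset.sum_add_distrib]
        exact Finset.sum_congr rfl fun j _ => (Nat.div_add_mod (t j) p).symm
      have hxmod : x % p = n' % p := by rw [hxn, Nat.mul_add_mod]
      by_cases hc : x = n' % p
      · have hs'' : s' = n' / p := by
          have h := Nat.div_add_mod n' p
          have h2 : p * s' = p * (n' / p) := by omega
          exact Nat.eq_of_mul_eq_mul_left hp0 h2
        by_cases hc2 : a % p + n' % p < p
        · have h3a : n % p = a % p + n' % p := by
            rw [hnn, Nat.add_mod, Nat.mod_eq_of_lt hc2]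
          have h3b : n / p = a / p + n' / p := by
            rw [hnn, Nat.add_div hp0, if_neg (not_le.2 hc2)]
            omega
          rw [hsum, h3a, h3b, Nat.add_sub_cancel_left, hs'']
          ring
        · have e5 : a % p < p := Nat.mod_lt _ hp0
          have e6 : n' % p < p := Nat.mod_lt _ hp0
          have h4 : n % p < a % p := by
            have h5 : n % p = (a % p + n' % p) % p := by rw [hnn, Nat.add_mod]
            rw [Nat.mod_eq_sub_mod (le_of_not_gt hc2)] at h5
            rw [Nat.mod_eq_of_lt (show a % p + n' % p - p < p by omega)] at h5
            omega
          rw [Nat.choose_eq_zero_of_lt h4]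
          ring
      · have hxp : x ≥ p := by
          rcases Nat.lt_or_ge x p with h | h
          · rw [Nat.mod_eq_of_lt h] at hxmod; omega
          · exact h
        have g1 : genMultinomial (n' % p) (fun j => t j % p) = 0 := by
          unfold genMultinomial
          rw [show (∑ j, (fun (j : Fin k) => t j % p) j) = x from rfl, if_neg hc]
        have g2 : genMultinomial (n % p - a % p) (fun j => t j % p) = 0 := by
          unfold genMultinomial
          rw [show (∑ j, (fun (j : Fin k) => t j % p) j) = x from rfl, if_neg]
          have : n % p < p := Nat.mod_lt _ hp0
          omega
        rw [g1, g2]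
        ring
    rw [key]

lemma digit_div (p l x : ℕ) : digit p l (x / p) = digit p (l + 1) x := by
  unfold digit
  rw [Nat.div_div_eq_div_mul, ← pow_succ']

lemma digit_zero (p x : ℕ) : digit p 0 x = x % p := by
  unfold digit
  rw [pow_zero, Nat.div_one]

/-- Lucas' theorem for multinomial coefficients: if `n = m_0 + ⋯ + m_i`, then
`n!/(m_0! ⋯ m_i!) ≡ ∏_l C(digit_l n; digit_l m_0, ..., digit_l m_i) (mod p)`,
where the product runs over all base-`p` digit positions of `n` (all further
factors being `1`). -/
theorem lucas_multinomial (p : ℕ) (hp : p.Prime) (i : ℕ) (m : Fin (i + 1) → ℕ)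
    (n : ℕ) (hn : n = ∑ j, m j) (L : ℕ) (hL : n < p ^ L) :
    Nat.multinomial Finset.univ m ≡
      ∏ l ∈ Finset.range L, genMultinomial (digit p l n) (fun j => digit p l (m j))
        [MOD p] := by
  induction L generalizing m n with
  | zero =>
    have hn0 : n = 0 := by simpa using hL
    have hs : ∑ j, m j = 0 := by rw [← hn, hn0]
    have hm : ∀ j, m j = 0 := by
      intro j
      exact Finset.sum_eq_zero_iff.mp hs j (Finset.mem_univ j)
    have h1 : Nat.multinomial Finset.univ m
        = Nat.multinomial Finset.univ (fun _ : Fin (i + 1) => 0) :=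
      Nat.multinomial_congr (fun j _ => hm j)
    rw [Finset.range_zero, Finset.prod_empty, h1]
    simp [Nat.multinomial]
    rfl
  | succ L ihL =>
    have hstep := step p hp m
    rw [← hn] at hstep
    by_cases hc : (∑ j, m j % p) = n % p
    · have h1 : n = p * (∑ j, m j / p) + (∑ j, m j % p) := by
        rw [hn, Finset.mul_sum, ← Finset.sum_add_distrib]
        exact Finset.sum_congr rfl fun j _ => (Nat.div_add_mod (m j) p).symm
      have hdiv : (∑ j, m j / p) = n / p := by
        have h2 := Nat.div_add_mod n p
        have h3 : p * (∑ j, m j / p) = p * (n / p) := by omega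
        exact Nat.eq_of_mul_eq_mul_left hp.pos h3
      have hLp : n / p < p ^ L := by
        rw [Nat.div_lt_iff_lt_mul hp.pos, ← pow_succ]
        exact hL
      have ih := ihL (fun j => m j / p) (n / p) hdiv.symm hLp
      refine hstep.trans ?_
      refine (Nat.ModEq.mul_left _ ih).trans ?_
      have heq : genMultinomial (n % p) (fun j => m j % p) *
          ∏ l ∈ Finset.range L, genMultinomial (digit p l (n / p))
            (fun j => digit p l (m j / p))
          = ∏ l ∈ Finset.range (L + 1), genMultinomial (digit p l n)
              (fun j => digit p l (m j)) := by
        rw [Finset.prod_range_succ', mul_comm]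
        congr 1
        · refine Finset.prod_congr rfl fun l _ => ?_
          rw [digit_div]
          congr 1
          funext j
          rw [digit_div]
        · rw [digit_zero]
          congr 1
          funext j
          rw [digit_zero]
      rw [heq]
    · have hg0 : genMultinomial (n % p) (fun j => m j % p) = 0 := by
        unfold genMultinomial
        rw [show (∑ j, (fun (j : Fin (i+1)) => m j % p) j) = ∑ j, m j % p from rfl,
          if_neg hc]
      have hg : genMultinomial (digit p 0 n) (fun j => digit p 0 (m j)) = 0 := by
        have : (fun j : Fin (i+1) => digit p 0 (m j)) = (fun j => m j % p) := by
          funext j; rw [digit_zero]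
        rw [digit_zero, this, hg0]
      have hR : ∏ l ∈ Finset.range (L + 1), genMultinomial (digit p l n)
          (fun j => digit p l (m j)) = 0 :=
        Finset.prod_eq_zero (Finset.mem_range.2 (Nat.succ_pos L)) hg
      rw [hR]
      refine hstep.trans ?_
      rw [hg0, zero_mul]
end

section
/- Let p be a prime and let m_0, ..., m_i be natural numbers with n = m_0 + ... + m_i. Then the multinomial coefficient n!/(m_0!···m_i!) is nonzero modulo p (i.e., its image in ZMod p is nonzero) if and only if the summation n = m_0 + ... + m_i has no carry over base p, that is, if and only if for every l ≥ 0 one has digit_l(m_0) + ... + digit_l(m_i) ≤ p − 1. -/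
section Aux

variable {p : ℕ}

lemma digit_succ (p l a : ℕ) : digit p (l + 1) a = digit p l (a / p) := by
  simp [digit, Nat.div_div_eq_div_mul, pow_succ, mul_comm]

lemma digit_lt (hp : p.Prime) (l a : ℕ) : digit p l a < p :=
  Nat.mod_lt _ hp.pos

/-- If there is no carry in any digit, division of the sum distributes. -/
lemma div_pow_add (hp : p.Prime) (a b : ℕ)
    (h : ∀ l, digit p l a + digit p l b ≤ p - 1) :
    ∀ l, (a + b) / p ^ l = a / p ^ l + b / p ^ l := by
  intro l
  induction l with
  | zero => simp
  | succ l ih =>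
    have hd : a / p ^ l % p + b / p ^ l % p < p := by
      have hl := h l
      have hpos := hp.pos
      unfold digit at hl
      omega
    rw [pow_succ, ← Nat.div_div_eq_div_mul, ih, Nat.add_div hp.pos,
      ← Nat.div_div_eq_div_mul, ← Nat.div_div_eq_div_mul]
    simp [Nat.not_le.mpr hd]

lemma digit_add (hp : p.Prime) (a b : ℕ)
    (h : ∀ l, digit p l a + digit p l b ≤ p - 1) (l : ℕ) :
    digit p l (a + b) = digit p l a + digit p l b := by
  have hd : a / p ^ l % p + b / p ^ l % p < p := by
    have hl := h l; have hpos := hp.pos; unfold digit at hl; omega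
  unfold digit
  rw [div_pow_add hp a b h l, Nat.add_mod, Nat.mod_eq_of_lt hd]

lemma digit_sum {ι : Type*} [DecidableEq ι] (hp : p.Prime) (s : Finset ι) (f : ι → ℕ) :
    (∀ l, ∑ j ∈ s, digit p l (f j) ≤ p - 1) →
      ∀ l, digit p l (∑ j ∈ s, f j) = ∑ j ∈ s, digit p l (f j) := by
  induction s using Finset.induction_on with
  | empty => intro _ l; simp [digit]
  | @insert a s ha ih =>
    intro h l
    have hs : ∀ l, ∑ j ∈ s, digit p l (f j) ≤ p - 1 := by
      intro l'
      have := h l'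
      rw [Finset.sum_insert ha] at this
      omega
    have hds := ih hs
    rw [Finset.sum_insert ha, Finset.sum_insert ha, ← hds l]
    refine digit_add hp _ _ (fun l' => ?_) l
    have := h l'
    rw [Finset.sum_insert ha] at this
    rw [hds l']
    omega

/-- For `x < p` prime, `x.choose y` is nonzero mod `p` iff `y ≤ x`. -/
lemma choose_small (hp : p.Prime) {x y : ℕ} (hx : x < p) :
    ((x.choose y : ZMod p) ≠ 0) ↔ y ≤ x := by
  rw [Ne, ZMod.natCast_eq_zero_iff]
  constructor
  · intro h
    by_contra hxy
    push_neg at hxy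
    exact h (by simp [Nat.choose_eq_zero_of_lt hxy])
  · intro hyx h
    have : p ∣ Nat.factorial x := by
      rw [← Nat.choose_mul_factorial_mul_factorial hyx]
      exact Dvd.dvd.mul_right (Dvd.dvd.mul_right h _) _
    exact absurd ((Nat.Prime.dvd_factorial hp).mp this) (Nat.not_le.mpr hx)

lemma lucas_cast (hp : p.Prime) (n k : ℕ) :
    ((n.choose k : ZMod p) : ZMod p) =
      ((n % p).choose (k % p) : ZMod p) * ((n / p).choose (k / p) : ZMod p) := by
  haveI := Fact.mk hp
  have := (Choose.choose_modEq_choose_mod_mul_choose_div (n := n) (k := k) (p := p))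
  have h2 := (ZMod.intCast_eq_intCast_iff _ _ _).mpr this
  push_cast at h2
  exact_mod_cast h2

/-- Kummer's theorem for binomial coefficients, digit form. -/
lemma choose_ne_zero_iff (hp : p.Prime) :
    ∀ N a b, a + b ≤ N →
      ((((a + b).choose b : ℕ) : ZMod p) ≠ 0 ↔ ∀ l, digit p l a + digit p l b ≤ p - 1) := by
  haveI := Fact.mk hp
  intro N
  induction N with
  | zero =>
    intro a b hab
    have ha : a = 0 := by omega
    have hb : b = 0 := by omega
    subst ha; subst hb
    simp [digit, Nat.sub_le_iff_le_add, hp.pos]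
  | succ N ih =>
    intro a b hab
    rcases Nat.eq_zero_or_pos (a + b) with h0 | hpos
    · have ha : a = 0 := by omega
      have hb : b = 0 := by omega
      subst ha; subst hb
      simp [digit, Nat.sub_le_iff_le_add, hp.pos]
    rw [lucas_cast hp, mul_ne_zero_iff]
    by_cases hc : a % p + b % p < p
    · -- no carry at digit 0
      have hmod : (a + b) % p = a % p + b % p := by
        rw [Nat.add_mod]; exact Nat.mod_eq_of_lt hc
      have hdiv : (a + b) / p = a / p + b / p := by
        have h1 := Nat.mod_add_div a p
        have h2 := Nat.mod_add_div b p
        have h3 := Nat.mod_add_div (a + b) p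
        nlinarith [hp.pos]
      have hrec : a / p + b / p ≤ N := by
        have h4 : (a + b) / p < a + b := Nat.div_lt_self hpos hp.one_lt
        rw [hdiv] at h4
        exact Nat.lt_succ_iff.mp (lt_of_lt_of_le h4 hab)
      rw [hmod, hdiv]
      rw [ih (a / p) (b / p) hrec]
      have hsmall : ((a % p + b % p).choose (b % p) : ZMod p) ≠ 0 ↔
          b % p ≤ a % p + b % p := choose_small hp hc
      rw [hsmall]
      constructor
      · rintro ⟨-, h⟩ l
        cases l with
        | zero => simpa [digit] using Nat.le_sub_one_of_lt hc
        | succ l => rw [digit_succ, digit_succ]; exact h l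
      · intro h
        exact ⟨Nat.le_add_left _ _, fun l => by
          rw [← digit_succ, ← digit_succ]; exact h (l + 1)⟩
    · -- carry at digit 0: both sides false
      push_neg at hc
      have hmod : (a + b) % p < b % p := by
        have h1 : a % p < p := Nat.mod_lt _ hp.pos
        have h2 : b % p < p := Nat.mod_lt _ hp.pos
        have e0 : (a + b) % p = (a % p + b % p) % p := Nat.add_mod a b p
        have e1 : (a % p + b % p) % p = a % p + b % p - p := by
          rw [Nat.mod_eq_sub_mod hc]
          exact Nat.mod_eq_of_lt (by omega)
        omega
      constructor
      · rintro ⟨h1, -⟩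
        exact absurd (by simp [Nat.choose_eq_zero_of_lt hmod]) h1
      · intro h
        have := h 0
        simp only [digit, pow_zero, Nat.div_one] at this
        omega

lemma multinomial_aux {ι : Type*} [DecidableEq ι] (hp : p.Prime) (s : Finset ι) (f : ι → ℕ) :
    ((Nat.multinomial s f : ZMod p) ≠ 0) ↔ ∀ l, ∑ j ∈ s, digit p l (f j) ≤ p - 1 := by
  haveI := Fact.mk hp
  induction s using Finset.induction_on with
  | empty => simp [Nat.sub_le_iff_le_add, hp.pos]
  | @insert a s ha ih =>
    rw [Nat.multinomial_insert ha, Nat.cast_mul, mul_ne_zero_iff]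
    have hC := choose_ne_zero_iff hp ((∑ i ∈ s, f i) + f a) (∑ i ∈ s, f i) (f a) le_rfl
    rw [add_comm (∑ i ∈ s, f i) (f a)] at hC
    refine (and_congr hC ih).trans ?_
    constructor
    · rintro ⟨h1, h2⟩ l
      rw [Finset.sum_insert ha]
      have hds := digit_sum hp s f h2
      have := h1 l
      rw [hds l] at this
      omega
    · intro h
      have h2 : ∀ l, ∑ j ∈ s, digit p l (f j) ≤ p - 1 := by
        intro l
        have := h l
        rw [Finset.sum_insert ha] at this
        omega
      refine ⟨fun l => ?_, h2⟩
      have hds := digit_sum hp s f h2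
      rw [hds l]
      have := h l
      rw [Finset.sum_insert ha] at this
      omega

end Aux

/-- The multinomial coefficient `n!/(m_0! ⋯ m_i!)` (with `n = m_0 + ⋯ + m_i`) is
nonzero modulo a prime `p` if and only if the summation `n = m_0 + ⋯ + m_i` has no
carry over base `p`, i.e. for every digit position `l` one has
`digit_l(m_0) + ⋯ + digit_l(m_i) ≤ p - 1`. -/
theorem multinomial_ne_zero_iff_noCarry (p : ℕ) (hp : p.Prime) (i : ℕ)
    (m : Fin (i + 1) → ℕ) (n : ℕ) (hn : n = ∑ j, m j) :
    ((Nat.multinomial Finset.univ m : ZMod p) ≠ 0) ↔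
      ∀ l, (∑ j, digit p l (m j)) ≤ p - 1 := by
  exact multinomial_aux hp Finset.univ m
end
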